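/- Let a ≥ 2 be a real number and let P ∈ E_a(ℝ) be a point of infinite order. Then −(1/4)·log a − 1/(2·√a) < ( (1/2)·log max{1, |x(P)|} − (1/12)·log|Δ(E_a)| ) − λ_∞(P) < 0. -/

import Mathlib

open Filter Real

/-- The translated elliptic curve `E'_a : y² = x³ − 3√a·x² + 4a·x − 2a^{3/2}` over `ℝ`,
obtained from `E_a : y² = x³ + a·x` via `x ↦ x + √a`. -/
noncomputable def E'curve (a : ℝ) : WeierstrassCurve.Affine ℝ :=
  { a₁ := 0, a₂ := -3 * Real.sqrt a, a₃ := 0, a₄ := 4 * a, a₆ := -2 * a ^ ((3 : ℝ) / 2) }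

/-- The x-coordinate of a point (with junk value `0` at the identity `O`). -/
def xc {F : Type*} [Field F] {W : WeierstrassCurve.Affine F} : W.Point → F
  | .zero => 0
  | @WeierstrassCurve.Affine.Point.some _ _ _ x _ _ => x

/-- For a finite point `Q` of `E'_a` with `x(Q) = x`, the quantity
`z(Q) = 1 − 8a·x⁻² + 16·a^{3/2}·x⁻³ − 8a²·x⁻⁴` from Tate's series. -/
noncomputable def zE' (a x : ℝ) : ℝ :=
  1 - 8 * a / x ^ 2 + 16 * a ^ ((3 : ℝ) / 2) / x ^ 3 - 8 * a ^ 2 / x ^ 4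

/-- The archimedean local height of a point `P ∈ E_a(ℝ)` of infinite order (`a > 0`),
computed on the translated curve `E'_a` at the corresponding point `P'`:
`λ_∞(P) = (1/8)·log(x(P')⁴·z(P')) + (1/8)·S − (1/12)·log|Δ(E_a)|`, where `S` is the
(hypothesized) value of the series `∑_{k≥1} 4^{−k}·log z(2^kP')` and `Δ(E_a) = −64a³`. -/
noncomputable def lamInf' (a : ℝ) {W : WeierstrassCurve.Affine ℝ} (P' : W.Point) (S : ℝ) : ℝ :=
  (1 / 8) * Real.log ((xc P') ^ 4 * zE' a (xc P')) + (1 / 8) * S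
    - (1 / 12) * Real.log |(-64) * a ^ 3|

/-! ### Auxiliary analytic lemmas -/

/-- The normalized `z`-function: `zE' a (t·u) = zfun u` where `t = √a`. -/
noncomputable def zfun (u : ℝ) : ℝ := 1 - 8/u^2 + 16/u^3 - 8/u^4

lemma zfun_ge_half {u : ℝ} (hu : 1 < u) : 1/2 ≤ zfun u := by
  have hu0 : (0:ℝ) < u := by linarith
  have key : zfun u - 1/2 = ((u-2)^2*((u+2)^2-8))/(2*u^4) := by
    unfold zfun; field_simp; ring
  have hN : (0:ℝ) ≤ (u-2)^2*((u+2)^2-8) := by nlinarith [sq_nonneg (u-2)]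
  have h2 : (0:ℝ) ≤ zfun u - 1/2 := by
    rw [key]; exact div_nonneg hN (by positivity)
  linarith

lemma zfun_pos {u : ℝ} (hu : 1 < u) : 0 < zfun u := by
  have := zfun_ge_half hu; linarith

lemma zfun_le_one {u : ℝ} (hu : 1 < u) : zfun u ≤ 1 := by
  have hu0 : (0:ℝ) < u := by linarith
  have key : 1 - zfun u = (8*(u-1)^2)/u^4 := by
    unfold zfun; field_simp; ring
  have h2 : (0:ℝ) ≤ 1 - zfun u := by
    rw [key]; exact div_nonneg (by positivity) (by positivity)
  linarith

lemma neglog_nonneg {u : ℝ} (hu : 1 < u) : 0 ≤ -Real.log (zfun u) := by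
  have := Real.log_nonpos (by linarith [zfun_pos hu]) (zfun_le_one hu)
  linarith

lemma neglog_le_log_two {u : ℝ} (hu : 1 < u) : -Real.log (zfun u) ≤ Real.log 2 := by
  have h := Real.log_le_log (by norm_num : (0:ℝ) < 1/2) (zfun_ge_half hu)
  rw [show (1/2 : ℝ) = 2⁻¹ by norm_num, Real.log_inv] at h
  linarith

lemma neglog_le_inv_sub_one {z : ℝ} (hz : 0 < z) : -Real.log z ≤ 1/z - 1 := by
  have h := Real.log_le_sub_one_of_pos (show (0:ℝ) < z⁻¹ by positivity)
  rw [Real.log_inv] at h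
  rw [one_div]
  linarith

lemma L3 {u : ℝ} (h4 : 4 < u) (h13 : u ≤ 67/5) :
    1/(zfun u) - 1 + 2311/10000 ≤ 4/u := by
  have hu0 : (0:ℝ) < u := by linarith
  have hu1 : (1:ℝ) < u := by linarith
  have hz : 0 < zfun u := zfun_pos hu1
  have hzval : zfun u = (u^4-8*u^2+16*u-8)/u^4 := by unfold zfun; field_simp
  have hp : 0 < u^4-8*u^2+16*u-8 := by
    have : zfun u * u^4 = u^4-8*u^2+16*u-8 := by rw [hzval]; field_simp
    nlinarith [this, mul_pos hz (show (0:ℝ) < u^4 by positivity)]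
  have hfrac : 1/(zfun u) - 1 = (8*u^2-16*u+8)/(u^4-8*u^2+16*u-8) := by
    rw [hzval]; rw [div_div_eq_mul_div, one_mul, div_sub_one hp.ne']; ring
  rw [hfrac]
  rw [div_add' _ _ _ (by positivity), div_le_div_iff₀ (by positivity) hu0]
  nlinarith [mul_nonneg (sub_nonneg.2 h4.le) (sub_nonneg.2 h13), sq_nonneg (u-4),
    sq_nonneg (u-13),
    mul_nonneg (mul_nonneg (sub_nonneg.2 h4.le) (sub_nonneg.2 h13)) (sq_nonneg u),
    mul_nonneg (mul_nonneg (sub_nonneg.2 h4.le) (sub_nonneg.2 h13)) hu0.le]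

lemma L4 {u : ℝ} (h13 : 13 ≤ u) :
    1/(zfun u) - 1 ≤ 4*(3*u-4)/(u*(u+4)*(u-1)) := by
  have hu0 : (0:ℝ) < u := by linarith
  have hu1 : (1:ℝ) < u := by linarith
  have hz : 0 < zfun u := zfun_pos hu1
  have hzval : zfun u = (u^4-8*u^2+16*u-8)/u^4 := by unfold zfun; field_simp
  have hp : 0 < u^4-8*u^2+16*u-8 := by
    have h2 : (169:ℝ) ≤ u^2 := by nlinarith
    nlinarith [sq_nonneg u, mul_nonneg (sq_nonneg u) (by linarith : (0:ℝ) ≤ u^2 - 8)]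
  have hfrac : 1/(zfun u) - 1 = (8*u^2-16*u+8)/(u^4-8*u^2+16*u-8) := by
    rw [hzval]; rw [div_div_eq_mul_div, one_mul, div_sub_one hp.ne']; ring
  rw [hfrac, div_le_div_iff₀ hp (by nlinarith : (0:ℝ) < u*(u+4)*(u-1))]
  nlinarith [mul_nonneg (mul_nonneg (pow_nonneg (by linarith : (0:ℝ) ≤ u-1) 3)
      (by linarith : (0:ℝ) ≤ u-6)) (by linarith : (0:ℝ) ≤ u+3),
    sq_nonneg (u-1), pow_nonneg (by linarith : (0:ℝ) ≤ u-1) 3]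

lemma step_quarter {p q : ℝ} (hp : 4 < p)
    (h : 4 * q * ((p - 1) * ((p - 1)^2 + 1)) = p^4 - 8*(p - 1)^2) :
    q - 1 ≤ (p - 1)/4 := by
  have hD : 0 < (p-1)*((p-1)^2+1) := by nlinarith
  have key : (q - 1 - (p-1)/4) * (4*((p-1)*((p-1)^2+1)))
      = ((p-1)^2-1)^2 - (p-1)^2*((p-1)^2+1) := by linear_combination h
  have hneg : ((p-1)^2-1)^2 - (p-1)^2*((p-1)^2+1) ≤ 0 := by nlinarith [sq_nonneg (p-1)]
  by_contra hcon
  push_neg at hcon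
  nlinarith [mul_pos (by linarith : (0:ℝ) < q - 1 - (p-1)/4)
    (by linarith : (0:ℝ) < 4*((p-1)*((p-1)^2+1)))]

lemma step_pq {p q : ℝ} (hp : 4 < p)
    (h : 4 * q * ((p - 1) * ((p - 1)^2 + 1)) = p^4 - 8*(p - 1)^2) :
    (p+4)*(p-1) ≤ 4*p*q := by
  have hD : 0 < (p-1)*((p-1)^2+1) := by nlinarith
  have hpoly : (p+4)*(p-1)*((p-1)*((p-1)^2+1)) ≤ p*(p^4-8*(p-1)^2) := by
    nlinarith [sq_nonneg (p-1), mul_nonneg (sq_nonneg (p-1)) (by linarith : (0:ℝ) ≤ p - 4)]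
  have heq : p*(p^4-8*(p-1)^2) = (4*p*q)*((p-1)*((p-1)^2+1)) := by
    linear_combination (-p) * h
  rw [heq] at hpoly
  exact le_of_mul_le_mul_right hpoly hD

lemma step_u_le {p q : ℝ} (hp : 4 < p) (hq4 : q ≤ 4)
    (h : 4 * q * ((p - 1) * ((p - 1)^2 + 1)) = p^4 - 8*(p - 1)^2) :
    p ≤ 67/5 := by
  have h16 : (p+4)*(p-1) ≤ 16*p := le_trans (step_pq hp h) (by nlinarith)
  nlinarith

lemma step_u_ge13 {p q : ℝ} (hp : 4 < p) (hq : 4 < q)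
    (h : 4 * q * ((p - 1) * ((p - 1)^2 + 1)) = p^4 - 8*(p - 1)^2) :
    13 ≤ p := by
  have hD : 0 < (p-1)*((p-1)^2+1) := by nlinarith
  have key : (4*q - (p+3)) * ((p-1)*((p-1)^2+1)) = -(3*p^2-6*p+2) := by linear_combination h
  have hneg : -(3*p^2-6*p+2) < 0 := by nlinarith
  have : 4*q - (p+3) < 0 := by
    by_contra hcon
    push_neg at hcon
    nlinarith [mul_nonneg hcon hD.le]
  linarith

lemma step_inv_q {p q : ℝ} (hp : 4 < p) (hq : 4 < q)
    (h : 4 * q * ((p - 1) * ((p - 1)^2 + 1)) = p^4 - 8*(p - 1)^2) :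
    1/q ≤ 4*p/((p+4)*(p-1)) := by
  have hq0 : (0:ℝ) < q := by linarith
  have hE : (0:ℝ) < (p+4)*(p-1) := by nlinarith
  rw [div_le_div_iff₀ hq0 hE]
  have := step_pq hp h
  linarith

lemma frac_id {p : ℝ} (hp : 4 < p) :
    4*(3*p-4)/(p*(p+4)*(p-1)) + 4*p/((p+4)*(p-1)) = 4/p := by
  have h1 : p ≠ 0 := by linarith
  have h2 : p + 4 ≠ 0 := by linarith
  have h3 : p - 1 ≠ 0 := by linarith
  field_simp
  ring

/-! ### Tail sums of Tate's series -/

noncomputable def Rtail (W : ℕ → ℝ) (m : ℕ) : ℝ := ∑' k : ℕ, (1/4:ℝ)^k * W (m + k)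

section tailfacts
variable {W : ℕ → ℝ} (h0 : ∀ k, 0 ≤ W k) (h1 : ∀ k, W k ≤ Real.log 2)
include h0 h1

lemma summable_tail (m : ℕ) : Summable (fun k : ℕ => (1/4:ℝ)^k * W (m + k)) := by
  apply Summable.of_nonneg_of_le (fun k => mul_nonneg (by positivity) (h0 _))
    (fun k => mul_le_mul_of_nonneg_left (h1 _) (by positivity))
  exact (summable_geometric_of_lt_one (by norm_num) (by norm_num)).mul_right _

omit h1 in
lemma Rtail_nonneg (m : ℕ) : 0 ≤ Rtail W m :=
  tsum_nonneg (fun k => mul_nonneg (by positivity) (h0 _))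

lemma Rtail_le_crude (m : ℕ) : Rtail W m ≤ (4/3) * Real.log 2 := by
  have key : Rtail W m ≤ ∑' k : ℕ, (1/4:ℝ)^k * Real.log 2 := by
    apply Summable.tsum_le_tsum (fun k => mul_le_mul_of_nonneg_left (h1 _) (by positivity))
      (summable_tail h0 h1 m)
    exact (summable_geometric_of_lt_one (by norm_num) (by norm_num)).mul_right _
  rw [tsum_mul_right, tsum_geometric_of_lt_one (by norm_num) (by norm_num)] at key
  calc Rtail W m ≤ (1 - 1/4 : ℝ)⁻¹ * Real.log 2 := key
    _ = (4/3) * Real.log 2 := by norm_num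

lemma Rtail_succ (m : ℕ) : Rtail W m = W m + (1/4) * Rtail W (m+1) := by
  rw [Rtail, Summable.tsum_eq_zero_add (summable_tail h0 h1 m)]
  congr 1
  · simp
  · rw [Rtail, ← tsum_mul_left]
    exact tsum_congr fun k => by
      rw [show m + (k+1) = m+1+k from by omega, pow_succ]; ring

end tailfacts

/-- The key inductive bound on the tail of Tate's series. -/
lemma Rtail_sharp (u : ℕ → ℝ) (hu : ∀ k, 1 < u k)
    (hrec : ∀ k, 4 * u (k+1) * ((u k - 1) * ((u k - 1)^2 + 1)) = (u k)^4 - 8*(u k - 1)^2) :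
    ∀ m, 4 < u m → Rtail (fun j => -Real.log (zfun (u j))) m ≤ 4 / u m := by
  set W : ℕ → ℝ := fun j => -Real.log (zfun (u j)) with hW
  have h0 : ∀ k, 0 ≤ W k := fun k => neglog_nonneg (hu k)
  have h1 : ∀ k, W k ≤ Real.log 2 := fun k => neglog_le_log_two (hu k)
  have hlog2 : Real.log 2 ≤ 0.6933 := by
    have := Real.log_two_lt_d9; norm_num at this ⊢; linarith
  suffices H : ∀ n : ℕ, ∀ m, u m ≤ 1 + 3 * 4^n → 4 < u m → Rtail W m ≤ 4 / u m by
    intro m hm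
    obtain ⟨n, hn⟩ := pow_unbounded_of_one_lt (R := ℝ) (u m) (by norm_num : (1:ℝ) < 4)
    exact H n m (by linarith [hn]) hm
  intro n
  induction n with
  | zero =>
    intro m hle h4
    norm_num at hle; linarith
  | succ n ih =>
    intro m hle h4
    have hrecm := hrec m
    have hq1 : 1 < u (m+1) := hu (m+1)
    have hquarter : u (m+1) - 1 ≤ (u m - 1)/4 := step_quarter h4 hrecm
    have hnext_le : u (m+1) ≤ 1 + 3 * 4^n := by
      have h1' : (u m - 1)/4 ≤ 3 * 4^n := by
        have : u m - 1 ≤ 3 * 4^(n+1) := by linarith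
        rw [pow_succ] at this; linarith
      linarith
    have hWm : W m ≤ 1/(zfun (u m)) - 1 := neglog_le_inv_sub_one (zfun_pos (hu m))
    rw [Rtail_succ h0 h1 m]
    by_cases hc : u (m+1) ≤ 4
    · have hR1 := Rtail_le_crude h0 h1 (m+1)
      have hu13 : u m ≤ 67/5 := step_u_le h4 hc hrecm
      have hL3 := L3 h4 hu13
      calc W m + 1/4 * Rtail W (m+1)
          ≤ (1/(zfun (u m)) - 1) + 1/4 * ((4/3) * Real.log 2) := by
            have := Rtail_nonneg h0 (m+1)
            nlinarith [hR1]
        _ ≤ (1/(zfun (u m)) - 1) + 2311/10000 := by nlinarith [hlog2]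
        _ ≤ 4 / u m := hL3
    · push_neg at hc
      have h13 : 13 ≤ u m := step_u_ge13 h4 hc hrecm
      have hR1 := ih (m+1) hnext_le hc
      have hinv : 1/(u (m+1)) ≤ 4*(u m)/((u m + 4)*(u m - 1)) := step_inv_q h4 hc hrecm
      have hL4 := L4 h13
      have hid := frac_id h4
      have hu1pos : 0 < u (m+1) := by linarith
      calc W m + 1/4 * Rtail W (m+1)
          ≤ (1/(zfun (u m)) - 1) + 1/4 * (4 / u (m+1)) := by nlinarith [hR1]
        _ = (1/(zfun (u m)) - 1) + 1/(u (m+1)) := by ring_nf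
        _ ≤ 4*(3*(u m)-4)/((u m)*((u m)+4)*((u m)-1)) + 4*(u m)/(((u m)+4)*((u m)-1)) := by
            linarith
        _ = 4 / u m := hid

/-! ### The main theorem -/

set_option maxHeartbeats 2000000 in
/-- Lemma 3.4(b): for `a ≥ 2` and a point `P ∈ E_a(ℝ)` of infinite order (given by the
corresponding point `P'` on the translated curve `E'_a`, so `x(P) = x(P') − √a`),
`−(1/4)·log a − 1/(2·√a)
  < ((1/2)·log max{1,|x(P)|} − (1/12)·log|Δ(E_a)|) − λ_∞(P) < 0`. -/
theorem arch_a_pos_part_b (a : ℝ) (ha : 2 ≤ a)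
    (P' : (E'curve a).Point)
    (hP : ∀ n : ℕ, 0 < n → n • P' ≠ 0)
    (S : ℝ)
    (hS : HasSum
      (fun k : ℕ => (1 / 4 : ℝ) ^ (k + 1) * Real.log (zE' a (xc ((2 ^ (k + 1)) • P')))) S) :
    -(1 / 4) * Real.log a - 1 / (2 * Real.sqrt a)
        < ((1 / 2) * Real.log (max 1 |xc P' - Real.sqrt a|)
              - (1 / 12) * Real.log |(-64) * a ^ 3|)
            - lamInf' a P' S ∧
      ((1 / 2) * Real.log (max 1 |xc P' - Real.sqrt a|)
            - (1 / 12) * Real.log |(-64) * a ^ 3|)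
          - lamInf' a P' S < 0 := by
  have ha0 : (0:ℝ) < a := by linarith
  set t := Real.sqrt a with htdef
  have ht0 : 0 < t := Real.sqrt_pos.mpr ha0
  have ht2 : t^2 = a := Real.sq_sqrt ha0.le
  have ht1 : 1 < t := by nlinarith
  have hrpow : a ^ ((3:ℝ)/2) = t^3 := by
    rw [show ((3:ℝ)/2) = (1/2) * (3:ℕ) by norm_num, Real.rpow_mul ha0.le,
      Real.rpow_natCast, ← Real.sqrt_eq_rpow]
  -- the sequence of points
  set Q : ℕ → (E'curve a).Point := fun k => 2^k • P' with hQdef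
  have hQne : ∀ k, Q k ≠ 0 := fun k => hP (2^k) (by positivity)
  have hex : ∀ k, ∃ x y : ℝ, ∃ h : (E'curve a).Nonsingular x y,
      Q k = WeierstrassCurve.Affine.Point.some _ _ h := by
    intro k
    cases hQk : Q k with
    | zero => exact absurd hQk (hQne k)
    | some _ _ h => exact ⟨_, _, h, rfl⟩
  choose xs ys hns hQeq using hex
  have hxc : ∀ k, xc (Q k) = xs k := by intro k; rw [hQeq k]; rfl
  have heq : ∀ k, (ys k)^2 = ((xs k) - t) * (((xs k) - t)^2 + a) := by
    intro k
    have h := ((E'curve a).equation_iff _ _).mp (hns k).1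
    simp only [E'curve] at h
    rw [hrpow] at h
    linear_combination h - (3 * xs k + t) * ht2
  have hQsucc : ∀ k, Q (k+1) = Q k + Q k := by
    intro k
    show (2^(k+1)) • P' = _
    rw [pow_succ, mul_comm, mul_smul, two_smul]
  have hyne : ∀ k, ys k ≠ 0 := by
    intro k hy0
    have hnegY : ys k = (E'curve a).negY (xs k) (ys k) := by
      simp [WeierstrassCurve.Affine.negY, E'curve, hy0]
    have : Q k + Q k = 0 := by
      rw [hQeq k]
      exact WeierstrassCurve.Affine.Point.add_self_of_Y_eq hnegY
    exact hQne (k+1) (by rw [hQsucc k]; exact this)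
  have hxgt : ∀ k, t < xs k := by
    intro k
    have h := heq k
    have hy2 : 0 < (ys k)^2 :=
      lt_of_le_of_ne (sq_nonneg _) (Ne.symm (pow_ne_zero 2 (hyne k)))
    nlinarith [sq_nonneg (xs k - t)]
  -- duplication formula
  have hdup : ∀ k, xs (k+1) * (4 * (ys k)^2) = (xs k)^4 - 8*a*((xs k) - t)^2 := by
    intro k
    have hyne' : ys k ≠ (E'curve a).negY (xs k) (ys k) := by
      simp only [WeierstrassCurve.Affine.negY, E'curve]
      intro hcon
      exact hyne k (by linarith [hcon] : ys k = 0)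
    have hadd := WeierstrassCurve.Affine.Point.add_self_of_Y_ne (h₁ := hns k) hyne'
    have hxval : xs (k+1) = (E'curve a).addX (xs k) (xs k)
        ((E'curve a).slope (xs k) (xs k) (ys k) (ys k)) := by
      have h2 : xc (Q (k+1)) = (E'curve a).addX (xs k) (xs k)
          ((E'curve a).slope (xs k) (xs k) (ys k) (ys k)) := by
        rw [hQsucc k, hQeq k, hadd]; rfl
      rw [hxc] at h2; exact h2
    have hslope : (E'curve a).slope (xs k) (xs k) (ys k) (ys k)
        = (3*(xs k)^2 - 6*t*(xs k) + 4*a) / (2*(ys k)) := by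
      rw [WeierstrassCurve.Affine.slope_of_Y_ne rfl hyne']
      simp only [E'curve, WeierstrassCurve.Affine.negY, ← htdef]
      ring_nf
    have hy2ne : (2*(ys k)) ≠ 0 := by
      simp only [ne_eq, mul_eq_zero, not_or]; exact ⟨by norm_num, hyne k⟩
    rw [hxval, WeierstrassCurve.Affine.addX, hslope]
    show (((3*(xs k)^2 - 6*t*(xs k) + 4*a) / (2*(ys k)))^2
        + (E'curve a).a₁ * _ - (E'curve a).a₂ - xs k - xs k) * (4 * (ys k)^2)
        = (xs k)^4 - 8*a*((xs k) - t)^2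
    simp only [E'curve]
    have hexp : (((3*(xs k)^2 - 6*t*(xs k) + 4*a) / (2*(ys k)))^2
        + 0 * ((3*(xs k)^2 - 6*t*(xs k) + 4*a) / (2*(ys k))) - (-3*t) - xs k - xs k)
          * (4 * (ys k)^2)
        = (3*(xs k)^2 - 6*t*(xs k) + 4*a)^2 + (3*t - 2*(xs k)) * (4*(ys k)^2) := by
      have hyk := hyne k
      field_simp
      ring
    rw [hexp]
    linear_combination (4*(3*t - 2*(xs k))) * heq k
      - (16*a + 24*(xs k)^2 - 44*(xs k)*t + 12*t^2) * ht2
  -- normalized coordinates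
  obtain ⟨u, hxu⟩ : ∃ u : ℕ → ℝ, ∀ k, xs k = t * u k :=
    ⟨fun k => xs k / t, fun k => (mul_div_cancel₀ _ ht0.ne').symm⟩
  have hu1 : ∀ k, 1 < u k := by
    intro k
    have := hxgt k
    rw [hxu k] at this
    nlinarith
  have hu0 : ∀ k, 0 < u k := fun k => lt_trans one_pos (hu1 k)
  -- the recursion in normalized coordinates
  have hrec : ∀ k, 4 * u (k+1) * ((u k - 1) * ((u k - 1)^2 + 1))
      = (u k)^4 - 8*(u k - 1)^2 := by
    intro k
    have hd := hdup k
    rw [heq k, hxu k, hxu (k+1), ← ht2] at hd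
    have key : t^4 * (4 * u (k+1) * ((u k - 1) * ((u k - 1)^2 + 1)))
        = t^4 * ((u k)^4 - 8*(u k - 1)^2) := by linear_combination hd
    exact mul_left_cancel₀ (by positivity) key
  -- z-values in normalized coordinates
  have hzval : ∀ k, zE' a (xs k) = zfun (u k) := by
    intro k
    have hxk0 : xs k ≠ 0 := by nlinarith [hxgt k]
    have huk0 : u k ≠ 0 := (hu0 k).ne'
    rw [zE', zfun, hrpow, ← ht2, hxu k]
    field_simp
  -- the W sequence and its tail sums
  set W : ℕ → ℝ := fun j => -Real.log (zfun (u j)) with hWdef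
  have h0 : ∀ k, 0 ≤ W k := fun k => neglog_nonneg (hu1 k)
  have h1 : ∀ k, W k ≤ Real.log 2 := fun k => neglog_le_log_two (hu1 k)
  -- identify S
  have hSz : ∀ k : ℕ, zE' a (xc ((2 ^ (k+1)) • P')) = zfun (u (k+1)) := by
    intro k
    have : ((2:ℕ) ^ (k+1)) • P' = Q (k+1) := rfl
    rw [this, hxc, hzval]
  have hSeq : S = -(1/4) * Rtail W 1 := by
    have hsum : HasSum (fun k : ℕ => (-(1/4:ℝ)) * ((1/4)^k * W (1+k)))
        (-(1/4) * Rtail W 1) :=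
      HasSum.mul_left _ ((summable_tail h0 h1 1).hasSum)
    refine HasSum.unique ?_ hsum
    have hfun : (fun k : ℕ => (1 / 4 : ℝ) ^ (k + 1)
        * Real.log (zE' a (xc ((2 ^ (k + 1)) • P'))))
        = fun k : ℕ => (-(1/4:ℝ)) * ((1/4)^k * W (1+k)) := by
      funext k
      rw [hSz k, hWdef]
      simp only []
      rw [show 1 + k = k + 1 from by omega, pow_succ]
      ring
    rw [← hfun]
    exact hS
  have hR1nn : 0 ≤ Rtail W 1 := Rtail_nonneg h0 1
  have hR0 : Rtail W 0 = W 0 + (1/4) * Rtail W 1 := Rtail_succ h0 h1 0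
  have hR0nn : 0 ≤ Rtail W 0 := Rtail_nonneg h0 0
  -- basic facts about P'
  have hQ0 : Q 0 = P' := by show (2^0) • P' = P'; rw [pow_zero, one_smul]
  have hxcP : xc P' = t * u 0 := by rw [← hQ0, hxc, hxu]
  have hX0 : (0:ℝ) < t * u 0 := mul_pos ht0 (hu0 0)
  have hzP : zE' a (xc P') = zfun (u 0) := by rw [← hQ0, hxc, hzval]
  have hz0pos : 0 < zfun (u 0) := zfun_pos (hu1 0)
  -- the log of the product
  have hlogprod : Real.log ((xc P')^4 * zE' a (xc P'))
      = 4 * Real.log (t * u 0) + Real.log (zfun (u 0)) := by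
    rw [hzP, hxcP, Real.log_mul (by positivity) hz0pos.ne', Real.log_pow]
    norm_num
  -- the max term
  have habs : |xc P' - t| = t * (u 0 - 1) := by
    rw [hxcP, abs_of_pos (by nlinarith [hu1 0])]
    ring
  set M : ℝ := max 1 (t * (u 0 - 1)) with hMdef
  have hM1 : 1 ≤ M := le_max_left _ _
  have hM0 : 0 < M := lt_of_lt_of_le one_pos hM1
  -- the common expression
  have hkey : ((1 / 2) * Real.log (max 1 |xc P' - t|)
        - (1 / 12) * Real.log |(-64) * a ^ 3|) - lamInf' a P' S
      = (1/2) * Real.log M - (1/2) * Real.log (t * u 0)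
        - ((1/8) * Real.log (zfun (u 0)) + (1/8) * S) := by
    rw [lamInf', hlogprod, habs]
    ring
  rw [hkey]
  -- express the z-part via Rtail
  have hzpart : (1/8) * Real.log (zfun (u 0)) + (1/8) * S = -((1/8) * Rtail W 0) := by
    rw [hSeq, hR0, hWdef]
    simp only []
    ring
  rw [hzpart]
  -- preliminary log facts
  have hloga : Real.log a = 2 * Real.log t := by
    rw [← ht2, Real.log_pow]; norm_num
  have hloga2 : Real.log 2 ≤ Real.log a := Real.log_le_log two_pos ha
  have hlog2lb : (0.6931471803:ℝ) < Real.log 2 := Real.log_two_gt_d9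
  have hu01 : 1 < u 0 := hu1 0
  have hu00 : 0 < u 0 := hu0 0
  -- X' ≤ M (1+t)
  have hle : t * u 0 ≤ M * (1 + t) := by
    have e1 : t * u 0 = t*(u 0 - 1) + t := by ring
    rcases le_or_gt (t * (u 0 - 1)) 1 with hc | hc
    · have e3 : (1:ℝ)+t ≤ M*(1+t) := le_mul_of_one_le_left (by linarith) hM1
      linarith
    · have hMge : t*(u 0 - 1) ≤ M := le_max_right _ _
      have e4 : t * 1 ≤ t * (t*(u 0 - 1)) :=
        mul_le_mul_of_nonneg_left hc.le ht0.le
      have e5 : (t*(u 0 - 1)) * (1+t) ≤ M * (1+t) :=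
        mul_le_mul_of_nonneg_right hMge (by linarith)
      nlinarith [e4, e5]
  have hlogM_le : Real.log (t * u 0) - Real.log M ≤ Real.log (1 + t) := by
    have h2 := Real.log_le_log hX0 hle
    rw [Real.log_mul hM0.ne' (by linarith : (1:ℝ)+t ≠ 0)] at h2
    linarith
  have hlog1t : Real.log (1 + t) < Real.log t + 1/t := by
    have hpos : (0:ℝ) < (1+t)/t := by positivity
    have hne : (1+t)/t ≠ 1 := by
      intro h
      rw [div_eq_one_iff_eq ht0.ne'] at h
      linarith
    have h3 := Real.log_lt_sub_one_of_pos hpos hne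
    rw [Real.log_div (by linarith : (1:ℝ)+t ≠ 0) ht0.ne'] at h3
    have h4 : (1+t)/t - 1 = 1/t := by field_simp; ring
    linarith [h4 ▸ h3]
  constructor
  · -- lower bound
    have hRnn : (0:ℝ) ≤ 1/8 * Rtail W 0 := by linarith
    have : (1/2) * (Real.log (t * u 0) - Real.log M)
        < (1/4) * Real.log a + 1/(2*t) := by
      have h5 : (1/2) * (Real.log (t*u 0) - Real.log M) ≤ (1/2)*Real.log (1+t) := by
        linarith
      have h6 : (1/2)*Real.log (1+t) < (1/2)*Real.log t + 1/(2*t) := by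
        have ht' : 1/(2*t) = (1/2)*(1/t) := by ring
        rw [ht']
        linarith
      rw [hloga]
      linarith
    linarith
  · -- upper bound : (1/8) * Rtail W 0 < (1/2) * (log (t u0) - log M)
    have hgoal : (1/8) * Rtail W 0 < (1/2) * (Real.log (t * u 0) - Real.log M) → 
        1/2 * Real.log M - 1/2 * Real.log (t * u 0) - -(1/8 * Rtail W 0) < 0 := by
      intro h; linarith
    apply hgoal
    have hcrude : Rtail W 0 ≤ (4/3) * Real.log 2 := Rtail_le_crude h0 h1 0
    have hlogt2 : (1/2) * Real.log 2 ≤ Real.log t := by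
      rw [hloga] at hloga2; linarith
    rcases le_or_gt (t * (u 0 - 1)) 1 with hc | hc
    · -- M = 1
      have hMeq : M = 1 := max_eq_left hc
      have hlogtu : Real.log t < Real.log (t * u 0) :=
        Real.log_lt_log ht0 (by nlinarith)
      rw [hMeq, Real.log_one]
      rcases le_or_gt (u 0) 4 with h4 | h4
      · nlinarith [hlog2lb]
      · have hsharp := Rtail_sharp u hu1 hrec 0 h4
        have : Rtail W 0 < 1 := lt_of_le_of_lt hsharp (by rw [div_lt_one (by linarith)]; linarith)
        nlinarith [hlog2lb]
    · -- M = t (u0 - 1)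
      have hMeq : M = t * (u 0 - 1) := max_eq_right hc.le
      have hu0m1 : (0:ℝ) < u 0 - 1 := by linarith
      have hsplit : Real.log (t * u 0) - Real.log M
          = Real.log (u 0) - Real.log (u 0 - 1) := by
        rw [hMeq, Real.log_mul ht0.ne' hu00.ne', Real.log_mul ht0.ne' hu0m1.ne']
        ring
      rw [hsplit]
      rcases le_or_gt (u 0) 4 with h4 | h4
      · have hq : (4:ℝ)/3 ≤ u 0/(u 0 - 1) := by
          rw [le_div_iff₀ hu0m1]; linarith
        have hlogq : Real.log ((4:ℝ)/3) ≤ Real.log (u 0/(u 0 -1)) :=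
          Real.log_le_log (by norm_num) hq
        rw [Real.log_div hu00.ne' hu0m1.ne'] at hlogq
        have h43 : Real.log 2 < 3 * Real.log ((4:ℝ)/3) := by
          have h64 : Real.log 2 < Real.log ((64:ℝ)/27) :=
            Real.log_lt_log two_pos (by norm_num)
          rw [show ((64:ℝ)/27) = (4/3)^(3:ℕ) by norm_num, Real.log_pow] at h64
          push_cast at h64
          linarith
        nlinarith [hlog2lb]
      · have hsharp := Rtail_sharp u hu1 hrec 0 h4
        have hfrac : (0:ℝ) < (u 0 - 1)/(u 0) := by positivity
        have hne : (u 0 - 1)/(u 0) ≠ 1 := by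
          intro h
          rw [div_eq_one_iff_eq hu00.ne'] at h
          linarith
        have h5 := Real.log_lt_sub_one_of_pos hfrac hne
        rw [Real.log_div hu0m1.ne' hu00.ne'] at h5
        have h6 : (u 0 - 1)/(u 0) - 1 = -(1/(u 0)) := by field_simp; ring
        rw [h6] at h5
        -- so log u0 - log(u0-1) > 1/u0
        have h7 : 1/(u 0) < Real.log (u 0) - Real.log (u 0 - 1) := by linarith
        have h8 : (1/8) * Rtail W 0 ≤ (1/8) * (4 / u 0) := by linarith
        have h9 : (1/8) * (4/(u 0)) = (1/2) * (1/(u 0)) := by ring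
        nlinarith
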